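/- No tree-shaped polyomino of bounding size 2×n with n ≤ 3 folds onto the surface C of the unit cube. -/

import Mathlib

/-!
Common formal framework: polyominoes (as square complexes with possible slits),
their topological realisations, folded states, ambient isotopy, foldings onto the
surface of the unit cube, unlinks, and consistent mappings.
-/

open Classical
noncomputable section

namespace CubeFold

/-- Euclidean plane. -/
abbrev R2 := EuclideanSpace ℝ (Fin 2)
/-- Euclidean 3-space. -/
abbrev R3 := EuclideanSpace ℝ (Fin 3)

/-- A cell (unit square) of the integer lattice, indexed by its lower-left corner. -/
abbrev Cell := ℤ × ℤ

/-- Two cells are adjacent if they share an edge of the lattice. -/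
def cellAdj (c d : Cell) : Prop := (c.1 - d.1).natAbs + (c.2 - d.2).natAbs = 1

instance (c d : Cell) : Decidable (cellAdj c d) :=
  inferInstanceAs (Decidable ((c.1 - d.1).natAbs + (c.2 - d.2).natAbs = 1))

/-- A polyomino: a finite nonempty set of lattice cells, together with a symmetric set of
`joins` (pairs of adjacent cells glued along their common edge; adjacent cells that are not
joined are separated by a slit), such that the whole figure is edge-connected.
Since the cells sit at given positions of the plane, such a polyomino automatically admits a
flat placement in which distinct faces overlap only in edges. -/
structure Polyomino where
  cells : Finset Cell
  nonempty : cells.Nonempty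
  joins : Finset (Cell × Cell)
  joins_symm : ∀ e ∈ joins, (e.2, e.1) ∈ joins
  joins_mem : ∀ e ∈ joins, e.1 ∈ cells ∧ e.2 ∈ cells
  joins_adj : ∀ e ∈ joins, cellAdj e.1 e.2
  connected : ∀ c ∈ cells, ∀ d ∈ cells,
    Relation.ReflTransGen (fun a b => (a, b) ∈ joins) c d

/-- The closed unit square in the plane. -/
def unitSq : Set R2 := {x | 0 ≤ x 0 ∧ x 0 ≤ 1 ∧ 0 ≤ x 1 ∧ x 1 ≤ 1}

def mk2 (a b : ℝ) : R2 := WithLp.toLp 2 ![a, b]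

/-- The point of the plane corresponding to local coordinates `x` inside cell `c`. -/
def cellPt (c : Cell) (x : R2) : R2 := mk2 ((c.1 : ℝ) + x 0) ((c.2 : ℝ) + x 1)

/-- Index space: disjoint union of the (closed) unit squares of the cells of `P`. -/
def PolyIdx (P : Polyomino) : Type := {c : Cell // c ∈ P.cells} × {x : R2 // x ∈ unitSq}

instance (P : Polyomino) : TopologicalSpace (PolyIdx P) := by
  unfold PolyIdx; infer_instance

/-- Gluing relation: two points of (possibly different) cells are identified when they occupy
the same point of the plane and their cells are equal or joined. -/
def glueRel (P : Polyomino) : PolyIdx P → PolyIdx P → Prop := fun a b =>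
  cellPt a.1.1 a.2.1 = cellPt b.1.1 b.2.1 ∧ (a.1.1 = b.1.1 ∨ (a.1.1, b.1.1) ∈ P.joins)

/-- The underlying topological space of the polyomino `P` (a square complex). -/
def PolySpace (P : Polyomino) : Type := Quot (glueRel P)

instance (P : Polyomino) : TopologicalSpace (PolySpace P) := by
  unfold PolySpace; infer_instance

/-- The point of `PolySpace P` lying in cell `c` with local coordinates `x`. -/
def pt (P : Polyomino) (c : Cell) (hc : c ∈ P.cells) (x : R2) (hx : x ∈ unitSq) :
    PolySpace P :=
  Quot.mk (glueRel P) (⟨c, hc⟩, ⟨x, hx⟩)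

/-- The canonical flat placement of `P` in the plane. -/
def flatMap (P : Polyomino) : PolySpace P → R2 :=
  Quot.lift (fun a => cellPt a.1.1 a.2.1) (fun _ _ h => h.1)

/-- A map `PolySpace P → R3` is piecewise linear if each cell can be covered by finitely
many convex pieces on each of which the map is affine. -/
def IsPLMap (P : Polyomino) (F : PolySpace P → R3) : Prop :=
  ∀ (c : Cell) (hc : c ∈ P.cells), ∃ S : Finset (Finset R2),
    (∀ x ∈ unitSq, ∃ T ∈ S, x ∈ convexHull ℝ (T : Set R2)) ∧
    ∀ T ∈ S, ∃ g : R2 →ᵃ[ℝ] R3, ∀ x, ∀ hx : x ∈ unitSq,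
      x ∈ convexHull ℝ (T : Set R2) → F (pt P c hc x hx) = g x

/-- A folded state of `P`: a piecewise linear topological embedding of `P` into `R3`. -/
structure FoldedState (P : Polyomino) where
  toFun : PolySpace P → R3
  embedding : Topology.IsEmbedding toFun
  pl : IsPLMap P toFun

/-- A folding blueprint: a map whose restriction to each face of `P` is an isometry. -/
def IsBlueprint (P : Polyomino) (β : PolySpace P → R3) : Prop :=
  ∀ (c : Cell) (hc : c ∈ P.cells), ∀ (x y : R2) (hx : x ∈ unitSq) (hy : y ∈ unitSq),
    dist (β (pt P c hc x hx)) (β (pt P c hc y hy)) = dist x y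

/-- A folded state `F` (ε-)corresponds to a blueprint `β` (with the fixed ε = 1/2). -/
def Corresponds (P : Polyomino) (F : FoldedState P) (β : PolySpace P → R3) : Prop :=
  ∀ p : PolySpace P, dist (F.toFun p) (β p) < 1 / 2

/-- A flat folding blueprint: an isometric placement of the flat polyomino inside a plane
of `R3`. -/
def IsFlatBlueprint (P : Polyomino) (β : PolySpace P → R3) : Prop :=
  ∃ j : R2 → R3, Isometry j ∧ β = j ∘ flatMap P

/-- A trivial folding: a realisation of a flat folding blueprint. -/
def IsTrivialFolding (P : Polyomino) (F : FoldedState P) : Prop :=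
  ∃ β : PolySpace P → R3, IsFlatBlueprint P β ∧ Corresponds P F β

/-- An ambient isotopy of `R3`: a continuous family of self-homeomorphisms starting at the
identity. -/
def IsAmbientIsotopy (H : ℝ → R3 → R3) : Prop :=
  Continuous (fun q : ℝ × R3 => H q.1 q.2) ∧
  (∀ t : ℝ, ∃ h : R3 ≃ₜ R3, ∀ x, H t x = h x) ∧
  (∀ x, H 0 x = x)

/-- A folded state is valid (is a folding) if it is ambient isotopic to a trivial folding. -/
def ValidFolding (P : Polyomino) (F : FoldedState P) : Prop :=
  ∃ H : ℝ → R3 → R3, IsAmbientIsotopy H ∧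
    ∃ G : FoldedState P, IsTrivialFolding P G ∧ ∀ p, H 1 (F.toFun p) = G.toFun p

/-- The surface of the unit cube in `R3`. -/
def cubeSurface : Set R3 :=
  {p | (∀ i, 0 ≤ p i ∧ p i ≤ 1) ∧ ∃ i, p i = 0 ∨ p i = 1}

/-- The face of the unit cube with normal direction `i` at height `0` or `1`. -/
def cubeFace (i : Fin 3) (b : Bool) : Set R3 :=
  {p | (∀ j, 0 ≤ p j ∧ p j ≤ 1) ∧ p i = if b then 1 else 0}

/-- `P` folds onto the surface of the unit cube: some valid folding of `P` corresponds to a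
surjective folding blueprint `β : P → C`. -/
def FoldsOntoCube (P : Polyomino) : Prop :=
  ∃ F : FoldedState P, ValidFolding P F ∧
    ∃ β : PolySpace P → R3, IsBlueprint P β ∧ Set.range β = cubeSurface ∧
      Corresponds P F β

/-- `n` disjoint round circles, side by side in a plane. -/
def stdCircles (n : ℕ) : Set R3 :=
  {p | ∃ k : ℕ, k < n ∧ (p 0 - 3 * (k : ℝ)) ^ 2 + (p 1) ^ 2 = 1 ∧ p 2 = 0}

/-- A subset of `R3` is an unlink if some ambient isotopy carries it to a finite collection
of circles embedded side by side in a plane. -/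
def IsUnlink (L : Set R3) : Prop :=
  ∃ (n : ℕ) (H : ℝ → R3 → R3), IsAmbientIsotopy H ∧ (fun x => H 1 x) '' L = stdCircles n

/-- The (topological) boundary of the polyomino surface: the set of points having no open
neighbourhood homeomorphic to the plane. -/
def polyBoundary (P : Polyomino) : Set (PolySpace P) :=
  {p | ¬ ∃ U : Set (PolySpace P), IsOpen U ∧ p ∈ U ∧ Nonempty (U ≃ₜ R2)}

/-- A polyhedron in `R3`: a finite union of convex polytopes. -/
def IsPolyhedron (Q : Set R3) : Prop :=
  ∃ S : Finset (Finset R3), Q = ⋃ T ∈ S, convexHull ℝ (T : Set R3)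

/-- A polyhedral sphere: a polyhedron homeomorphic to the 2-sphere. -/
def IsPolyhedralSphere (Q : Set R3) : Prop :=
  IsPolyhedron Q ∧ Nonempty (Q ≃ₜ Metric.sphere (0 : R3) 1)

/-! ### Consistent mappings to the combinatorial cube -/

/-- The corner of cell `c` with local coordinates `k`. -/
def cornerPt (c : Cell) (k : Fin 2 × Fin 2) : ℤ × ℤ :=
  (c.1 + ((k.1 : ℕ) : ℤ), c.2 + ((k.2 : ℕ) : ℤ))

/-- Number of coordinates in which two vertices of the cube differ. -/
def vdiff (u v : Fin 3 → Bool) : ℕ := (Finset.univ.filter fun i => u i ≠ v i).card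

/-- Number of coordinates in which two corners of a square differ. -/
def kdiff (k k' : Fin 2 × Fin 2) : ℕ :=
  (if k.1 = k'.1 then 0 else 1) + (if k.2 = k'.2 then 0 else 1)

/-- A consistent mapping from the polyomino `P` to the unit cube, viewed as a homomorphism of
square complexes: cells are mapped to faces (`Fin 3 × Bool`: a normal direction together with a
side) and corners of cells to vertices of the cube (`Fin 3 → Bool`), so that each cell is mapped
isomorphically onto a face and identified corners of joined cells have equal images (hence edges
are mapped to edges and all incidences are preserved). -/
structure ConsMap (P : Polyomino) where
  cellMap : Cell → Fin 3 × Bool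
  vertMap : Cell → Fin 2 × Fin 2 → (Fin 3 → Bool)
  vert_on_face : ∀ c ∈ P.cells, ∀ k, vertMap c k (cellMap c).1 = (cellMap c).2
  face_iso : ∀ c ∈ P.cells, ∀ k k', vdiff (vertMap c k) (vertMap c k') = kdiff k k'
  join_compat : ∀ e ∈ P.joins, ∀ k k', cornerPt e.1 k = cornerPt e.2 k' →
    vertMap e.1 k = vertMap e.2 k'

/-- A consistent mapping is surjective if every face of the cube is the image of a cell. -/
def ConsMap.Surjective {P : Polyomino} (φ : ConsMap P) : Prop :=
  ∀ f : Fin 3 × Bool, ∃ c ∈ P.cells, φ.cellMap c = f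

/-! ### Rectangular polyominoes, holes and slits -/

/-- The cells of the full `m × n` rectangle (`m` columns, `n` rows). -/
def rectCells (m n : ℕ) : Finset Cell := Finset.Icc (0, 0) ((m : ℤ) - 1, (n : ℤ) - 1)

/-- All joins between adjacent cells of `S`. -/
def fullJoins (S : Finset Cell) : Finset (Cell × Cell) :=
  (S ×ˢ S).filter fun e => cellAdj e.1 e.2

/-- The two cells separated by the vertical lattice edge from `(p,q)` to `(p,q+1)`. -/
def vE (p q : ℤ) : Cell × Cell := ((p - 1, q), (p, q))

/-- The two cells separated by the horizontal lattice edge from `(p,q)` to `(p+1,q)`. -/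
def hE (p q : ℤ) : Cell × Cell := ((p, q - 1), (p, q))

/-- Both orientations of a join. -/
def remPair (e : Cell × Cell) : Finset (Cell × Cell) := {e, (e.2, e.1)}

/-- A lattice vertex interior to the `m × n` rectangle. -/
def intVert (m n : ℕ) (v : ℤ × ℤ) : Prop :=
  1 ≤ v.1 ∧ v.1 ≤ (m : ℤ) - 1 ∧ 1 ≤ v.2 ∧ v.2 ≤ (n : ℤ) - 1

/-- The four sides of the cell `c`, as pairs of separated cells:
left, right, bottom, top. -/
def cellSide (c : Cell) : Fin 4 → Cell × Cell :=
  ![vE c.1 c.2, vE (c.1 + 1) c.2, hE c.1 c.2, hE c.1 (c.2 + 1)]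

/-- `P` is the full `m × n` rectangle with exactly the joins of `R` slit open. -/
def RectWithSlits (P : Polyomino) (m n : ℕ) (R : Finset (Cell × Cell)) : Prop :=
  P.cells = rectCells m n ∧ P.joins = fullJoins (rectCells m n) \ R

/-- `P` is an `m × n` rectangle with a single unit square hole `h` (and no other holes). -/
def RectWithUnitHole (P : Polyomino) (m n : ℕ) (h : Cell) : Prop :=
  1 ≤ h.1 ∧ h.1 ≤ (m : ℤ) - 2 ∧ 1 ≤ h.2 ∧ h.2 ≤ (n : ℤ) - 2 ∧
  P.cells = (rectCells m n).erase h ∧ P.joins = fullJoins P.cells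

/-- `P` is an `m × n` rectangle with a single slit of size 1 (and no other holes). -/
def RectWithSlit1 (P : Polyomino) (m n : ℕ) : Prop :=
  ∃ p q : ℤ,
    (intVert m n (p, q) ∧ intVert m n (p, q + 1) ∧ RectWithSlits P m n (remPair (vE p q))) ∨
    (intVert m n (p, q) ∧ intVert m n (p + 1, q) ∧ RectWithSlits P m n (remPair (hE p q)))

/-- `P` is an `m × n` rectangle with a single I-slit of size 2 (and no other holes). -/
def RectWithISlit2 (P : Polyomino) (m n : ℕ) : Prop :=
  ∃ p q : ℤ,
    (intVert m n (p, q) ∧ intVert m n (p, q + 1) ∧ intVert m n (p, q + 2) ∧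
      RectWithSlits P m n (remPair (vE p q) ∪ remPair (vE p (q + 1)))) ∨
    (intVert m n (p, q) ∧ intVert m n (p + 1, q) ∧ intVert m n (p + 2, q) ∧
      RectWithSlits P m n (remPair (hE p q) ∪ remPair (hE (p + 1) q)))

/-- `P` is an `m × n` rectangle with a single L-slit of size 2 (and no other holes):
two perpendicular slit edges meeting at the interior vertex `(p,q)`. -/
def RectWithLSlit2 (P : Polyomino) (m n : ℕ) : Prop :=
  ∃ p q : ℤ, ∃ s t : Bool,
    intVert m n (p, q) ∧
    intVert m n (p, q + (if s then 1 else -1)) ∧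
    intVert m n (p + (if t then 1 else -1), q) ∧
    RectWithSlits P m n
      (remPair (vE p (if s then q else q - 1)) ∪ remPair (hE (if t then p else p - 1) q))

/-- `P` is an `m × n` rectangle with a single U-slit of size 3 (and no other holes):
three of the four sides of the cell `c` are slit open. -/
def RectWithUSlit3 (P : Polyomino) (m n : ℕ) : Prop :=
  ∃ c : Cell, ∃ k : Fin 4,
    intVert m n (c.1, c.2) ∧ intVert m n (c.1 + 1, c.2) ∧
    intVert m n (c.1, c.2 + 1) ∧ intVert m n (c.1 + 1, c.2 + 1) ∧
    RectWithSlits P m n ((Finset.univ.erase k).biUnion fun k' => remPair (cellSide c k'))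

/-- `P` is an `m × n` rectangle whose holes are exactly the unit square holes `H`
(all interior, pairwise non-touching) and no other holes. -/
def RectWithUnitHoles (P : Polyomino) (m n : ℕ) (H : Finset Cell) : Prop :=
  (∀ h ∈ H, 1 ≤ h.1 ∧ h.1 ≤ (m : ℤ) - 2 ∧ 1 ≤ h.2 ∧ h.2 ≤ (n : ℤ) - 2) ∧
  (∀ h ∈ H, ∀ h' ∈ H, h ≠ h' → 2 ≤ max (h.1 - h'.1).natAbs (h.2 - h'.2).natAbs) ∧
  P.cells = rectCells m n \ H ∧ P.joins = fullJoins P.cells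

/-- Two unit square holes cooperate: they lie in the same or adjacent rows (resp. columns) and
the number of columns (resp. rows) strictly between them is odd. -/
def Cooperate (h₁ h₂ : Cell) : Prop :=
  ((h₁.2 - h₂.2).natAbs ≤ 1 ∧ Odd ((h₁.1 - h₂.1).natAbs - 1)) ∨
  ((h₁.1 - h₂.1).natAbs ≤ 1 ∧ Odd ((h₁.2 - h₂.2).natAbs - 1))

/-- The images under a consistent mapping of the four boundary edges of a unit square hole `h`
(each edge given as the unordered pair of the images of its two endpoints):
the facing sides of the right, left, top and bottom neighbouring cell of `h`. -/
def holeSideEdge {P : Polyomino} (φ : ConsMap P) (h : Cell) : Fin 4 → Set (Fin 3 → Bool) :=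
  ![{φ.vertMap (h.1 + 1, h.2) (0, 0), φ.vertMap (h.1 + 1, h.2) (0, 1)},
    {φ.vertMap (h.1 - 1, h.2) (1, 0), φ.vertMap (h.1 - 1, h.2) (1, 1)},
    {φ.vertMap (h.1, h.2 + 1) (0, 0), φ.vertMap (h.1, h.2 + 1) (1, 0)},
    {φ.vertMap (h.1, h.2 - 1) (0, 1), φ.vertMap (h.1, h.2 - 1) (1, 1)}]

/-- A consistent mapping is good if for no unit square hole of `H` all four boundary edges of
the hole are mapped to a single edge of the cube. -/
def ConsMap.IsGood {P : Polyomino} (φ : ConsMap P) (H : Finset Cell) : Prop :=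
  ∀ h ∈ H, ¬ ∀ k k' : Fin 4, holeSideEdge φ h k = holeSideEdge φ h k'

/-! ### Tree-shaped polyominoes and bounding boxes -/

/-- A polyomino is tree-shaped if its dual graph is a tree; since it is connected by
definition, this amounts to having exactly `#cells - 1` (unordered) joins. -/
def TreeShaped (P : Polyomino) : Prop := P.joins.card = 2 * (P.cells.card - 1)

/-- `P` has bounding box with lower-left cell `(x0, y0)`, `w` columns and `h` rows. -/
def HasBoundingBox (P : Polyomino) (x0 y0 : ℤ) (w h : ℕ) : Prop :=
  (∀ c ∈ P.cells, x0 ≤ c.1 ∧ c.1 < x0 + w ∧ y0 ≤ c.2 ∧ c.2 < y0 + h) ∧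
  (∃ c ∈ P.cells, c.1 = x0) ∧ (∃ c ∈ P.cells, c.1 = x0 + w - 1) ∧
  (∃ c ∈ P.cells, c.2 = y0) ∧ (∃ c ∈ P.cells, c.2 = y0 + h - 1)

/-- Reachability in the dual graph of `P` avoiding the set `S` of cells. -/
def ReachAvoid (P : Polyomino) (S : Cell → Prop) : Cell → Cell → Prop :=
  Relation.ReflTransGen fun u v => (u, v) ∈ P.joins ∧ ¬ S u ∧ ¬ S v

/-- The cells of the polyomino `P_W`. -/
def pwCells : Finset Cell := {(1, 1), (2, 1), (3, 1), (3, 2), (4, 2), (4, 3), (4, 4)}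

/-- The eight signed-permutation symmetries of the lattice, composed with a translation. -/
def sym8 (s₁ s₂ sw : Bool) (t : Cell) (p : Cell) : Cell :=
  let q : Cell := if sw then (p.2, p.1) else p
  (t.1 + (if s₁ then -q.1 else q.1), t.2 + (if s₂ then -q.2 else q.2))

/-- `P` is congruent (up to rotation, reflection and translation) to the polyomino `P_W`. -/
def CongruentToPW (P : Polyomino) : Prop :=
  ∃ s₁ s₂ sw : Bool, ∃ t : Cell,
    P.cells.image (sym8 s₁ s₂ sw t) = pwCells ∧
    P.joins.image (fun e => (sym8 s₁ s₂ sw t e.1, sym8 s₁ s₂ sw t e.2)) = fullJoins pwCells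


namespace Comb


abbrev V3 := Nat

def nu (a b : V3) : Nat :=
  let c := a ^^^ b
  if c = 0 then 0 else if c = 1 ∨ c = 2 ∨ c = 4 then 1
  else if c = 7 then 3 else 2

def x3 (a b c : V3) : V3 := a ^^^ b ^^^ c

structure Pl where
  v00 : V3
  v10 : V3
  v01 : V3
  v11 : V3
deriving DecidableEq

def validB (p : Pl) : Bool :=
  nu p.v00 p.v10 == 1 && nu p.v00 p.v01 == 1 && nu p.v00 p.v11 == 2 &&
  nu p.v10 p.v01 == 2 && nu p.v10 p.v11 == 1 && nu p.v01 p.v11 == 1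

abbrev Pos := Nat × Nat

def extPl (d c : Pos) (pd : Pl) (x : V3) : Pl :=
  if c.1 = d.1 + 1 ∧ c.2 = d.2 then ⟨pd.v10, x, pd.v11, x3 x pd.v10 pd.v11⟩
  else if d.1 = c.1 + 1 ∧ c.2 = d.2 then ⟨x, pd.v00, x3 x pd.v00 pd.v01, pd.v01⟩
  else if c.2 = d.2 + 1 ∧ c.1 = d.1 then ⟨pd.v01, pd.v11, x, x3 x pd.v01 pd.v11⟩
  else ⟨x, x3 x pd.v00 pd.v10, pd.v00, pd.v10⟩

def adjB (d c : Pos) : Bool :=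
  (c.1 == d.1 + 1 && c.2 == d.2) || (d.1 == c.1 + 1 && c.2 == d.2) ||
  (c.2 == d.2 + 1 && c.1 == d.1) || (d.2 == c.2 + 1 && c.1 == d.1)

def corners (p : Pl) : List V3 := [p.v00, p.v10, p.v01, p.v11]

def sameSet (p q : Pl) : Bool :=
  (corners p).all (fun v => v ∈ corners q) && (corners q).all (fun v => v ∈ corners p)

def pwDistinct : List Pl → Bool
  | [] => true
  | a :: l => l.all (fun b => !sameSet a b) && pwDistinct l

def allV : List V3 := [0,1,2,3,4,5,6,7]

def go : Nat → List (Pos × Pl) → List Pos → Bool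
  | 0, assigned, rem => rem.isEmpty && pwDistinct (assigned.map fun cp => cp.2)
  | n+1, assigned, rem =>
    if rem.isEmpty then pwDistinct (assigned.map fun cp => cp.2)
    else rem.any fun c => assigned.any fun dp =>
      adjB dp.1 c && allV.any fun x =>
        let pc := extPl dp.1 c dp.2 x
        validB pc && go n ((c, pc) :: assigned) (rem.erase c)

def posList : List Pos := [(0,0),(1,0),(2,0),(0,1),(1,1),(2,1)]

def restPos : List Pos := [(1,0),(2,0),(0,1),(1,1),(2,1)]

def searchTop : Bool := go 5 [((0,0), (⟨0,1,2,3⟩ : Pl))] restPos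

set_option maxHeartbeats 4000000 in
theorem searchTop_false : searchTop = false := by decide

/-- the xor-completion identities valid placements satisfy -/
theorem valid_complete : ∀ a b c d : Fin 8,
    validB ⟨(a : ℕ), (b : ℕ), (c : ℕ), (d : ℕ)⟩ = true →
    x3 (b : ℕ) (a : ℕ) (c : ℕ) = (d : ℕ) ∧ x3 (a : ℕ) (b : ℕ) (d : ℕ) = (c : ℕ) ∧
    x3 (c : ℕ) (a : ℕ) (b : ℕ) = (d : ℕ) ∧ x3 (a : ℕ) (c : ℕ) (d : ℕ) = (b : ℕ) := by
  decide

theorem mem_allV {x : ℕ} (h : x < 8) : x ∈ allV := by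
  interval_cases x <;> simp [allV]

theorem pwDistinct_true : ∀ {l : List (Pos × Pl)},
    l.Pairwise (fun a b => sameSet a.2 b.2 = false) →
    pwDistinct (l.map fun cp => cp.2) = true := by
  intro l
  induction l with
  | nil => intro _; rfl
  | cons a l ih =>
    intro h
    rw [List.pairwise_cons] at h
    simp only [List.map_cons, pwDistinct, Bool.and_eq_true, List.all_eq_true]
    refine ⟨?_, ih h.2⟩
    intro b hb
    rcases List.mem_map.mp hb with ⟨cp, hcp, rfl⟩
    simp [h.1 cp hcp]

section Sound

variable (W : Pos → Pl) (J : Pos → Pos → Prop) (dep : Pos → ℕ) (f : Pos → Pos)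

/-- invariant of the search -/
def Inv (assigned : List (Pos × Pl)) (rem : List Pos) : Prop :=
  (∀ cp ∈ assigned, cp.1 ∈ posList ∧ cp.2 = W cp.1) ∧
  (assigned.map Prod.fst).Nodup ∧
  (∀ c ∈ rem, c ∈ posList) ∧ rem.Nodup ∧
  (∀ c ∈ rem, c ∉ assigned.map Prod.fst) ∧
  (∀ c ∈ posList, c ∈ rem ∨ c ∈ assigned.map Prod.fst) ∧
  ((0,0) : Pos) ∉ rem

variable
  (hvalid : ∀ c ∈ posList, validB (W c) = true)
  (h8 : ∀ c ∈ posList, (W c).v00 < 8 ∧ (W c).v10 < 8 ∧ (W c).v01 < 8 ∧ (W c).v11 < 8)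
  (hJmem : ∀ a b, J a b → a ∈ posList ∧ b ∈ posList)
  (hcompat : ∀ a b, J a b →
    (b.1 = a.1+1 ∧ b.2 = a.2 → (W a).v10 = (W b).v00 ∧ (W a).v11 = (W b).v01) ∧
    (b.2 = a.2+1 ∧ b.1 = a.1 → (W a).v01 = (W b).v00 ∧ (W a).v11 = (W b).v10))
  (hJadj : ∀ a b, J a b → (b.1 = a.1+1 ∧ b.2 = a.2) ∨ (a.1 = b.1+1 ∧ a.2 = b.2) ∨
      (b.2 = a.2+1 ∧ b.1 = a.1) ∨ (a.2 = b.2+1 ∧ a.1 = b.1))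
  (hJsymm : ∀ a b, J a b → J b a)
  (hpar : ∀ c, c ≠ ((0,0) : Pos) → c ∈ posList → J (f c) c ∧ dep (f c) < dep c)
  (hfaces : ∀ c ∈ posList, ∀ d ∈ posList, c ≠ d → sameSet (W c) (W d) = false)

theorem valid_complete'
    (hvalid : ∀ c ∈ posList, validB (W c) = true)
    (h8 : ∀ c ∈ posList, (W c).v00 < 8 ∧ (W c).v10 < 8 ∧ (W c).v01 < 8 ∧ (W c).v11 < 8)
    (c : Pos) (hc : c ∈ posList) :
    x3 (W c).v10 (W c).v00 (W c).v01 = (W c).v11 ∧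
    x3 (W c).v00 (W c).v10 (W c).v11 = (W c).v01 ∧
    x3 (W c).v01 (W c).v00 (W c).v10 = (W c).v11 ∧
    x3 (W c).v00 (W c).v01 (W c).v11 = (W c).v10 := by
  obtain ⟨h1, h2, h3, h4⟩ := h8 c hc
  have hv := hvalid c hc
  have := valid_complete ⟨(W c).v00, h1⟩ ⟨(W c).v10, h2⟩ ⟨(W c).v01, h3⟩ ⟨(W c).v11, h4⟩
  simp only [Fin.val_mk] at this
  exact this hv

include hvalid h8 hJmem hcompat hJadj hJsymm hpar hfaces in
theorem go_sound : ∀ (n : ℕ) (assigned : List (Pos × Pl)) (rem : List Pos),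
    rem.length = n → Inv W assigned rem → go n assigned rem = true := by
  intro n
  induction n with
  | zero =>
    intro assigned rem hlen hInv
    obtain ⟨ha, hnd, _, _, _, hcov, _⟩ := hInv
    rw [List.length_eq_zero_iff] at hlen
    subst hlen
    simp only [go, List.isEmpty_nil, Bool.true_and]
    apply pwDistinct_true
    have hnd2 : assigned.Pairwise (fun a b => a.1 ≠ b.1) := List.pairwise_map.mp hnd
    refine hnd2.imp_of_mem ?_
    intro a b hma hmb hne
    obtain ⟨ha1, ha2⟩ := ha a hma
    obtain ⟨hb1, hb2⟩ := ha b hmb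
    rw [ha2, hb2]
    exact hfaces a.1 ha1 b.1 hb1 hne
  | succ n ih =>
    intro assigned rem hlen hInv
    obtain ⟨ha, hnd, hremmem, hremnd, hdisj, hcov, hroot⟩ := hInv
    have hne : rem ≠ [] := by intro h; subst h; simp at hlen
    have hie : rem.isEmpty = false := by
      cases rem with
      | nil => exact absurd rfl hne
      | cons a l => rfl
    rw [go, hie]
    simp only [Bool.false_eq_true, if_false]
    -- choose cell of minimal depth in rem
    have hfs : rem.toFinset.Nonempty := by
      cases rem with
      | nil => exact absurd rfl hne
      | cons a l => exact ⟨a, by simp⟩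
    obtain ⟨c, hcmem, hcmin⟩ := rem.toFinset.exists_min_image dep hfs
    rw [List.mem_toFinset] at hcmem
    have hcpos : c ∈ posList := hremmem c hcmem
    have hcne : c ≠ (0,0) := by intro h; subst h; exact hroot hcmem
    obtain ⟨hJfc, hdepfc⟩ := hpar c hcne hcpos
    have hfcpos : f c ∈ posList := (hJmem _ _ hJfc).1
    have hfcnotrem : f c ∉ rem := by
      intro hmem
      exact absurd (hcmin (f c) (List.mem_toFinset.mpr hmem)) (by omega)
    have hfcassigned : f c ∈ assigned.map Prod.fst := by
      rcases hcov (f c) hfcpos with h | h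
      · exact absurd h hfcnotrem
      · exact h
    rcases List.mem_map.mp hfcassigned with ⟨dp, hdpmem, hdpfst⟩
    have hdpsnd : dp.2 = W (f c) := by
      have := (ha dp hdpmem).2; rw [this, hdpfst]
    rw [List.any_eq_true]
    refine ⟨c, hcmem, ?_⟩
    rw [List.any_eq_true]
    refine ⟨dp, hdpmem, ?_⟩
    rw [Bool.and_eq_true]
    -- the new invariant after assigning c
    have hInv' : Inv W ((c, W c) :: assigned) (rem.erase c) := by
      refine ⟨?_, ?_, ?_, ?_, ?_, ?_, ?_⟩
      · intro cp hcp
        rcases List.mem_cons.mp hcp with h | h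
        · subst h; exact ⟨hcpos, rfl⟩
        · exact ha cp h
      · simp only [List.map_cons, List.nodup_cons]
        exact ⟨hdisj c hcmem, hnd⟩
      · intro d hd; exact hremmem d (List.mem_of_mem_erase hd)
      · exact hremnd.erase c
      · intro d hd
        simp only [List.map_cons, List.mem_cons, not_or]
        constructor
        · exact (List.Nodup.mem_erase_iff hremnd).mp hd |>.1
        · exact hdisj d (List.mem_of_mem_erase hd)
      · intro d hdpos
        rcases hcov d hdpos with h | h
        · by_cases hdc : d = c
          · subst hdc; right; simp
          · left; exact (List.Nodup.mem_erase_iff hremnd).mpr ⟨hdc, h⟩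
        · right; simp only [List.map_cons, List.mem_cons]; right; exact h
      · intro h; exact hroot (List.mem_of_mem_erase h)
    have hlen' : (rem.erase c).length = n := by
      rw [List.length_erase_of_mem hcmem, hlen]; rfl
    have hrec := ih ((c, W c) :: assigned) (rem.erase c) hlen' hInv'
    have hWc8 := h8 c hcpos
    have hxid := valid_complete' W hvalid h8 c hcpos
    -- case on the relative position of c and f c
    constructor
    · -- adjacency
      rw [hdpfst]
      rcases hJadj _ _ hJfc with ⟨h1, h2⟩ | ⟨h1, h2⟩ | ⟨h1, h2⟩ | ⟨h1, h2⟩ <;>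
        · simp only [adjB, Bool.or_eq_true, Bool.and_eq_true, beq_iff_eq]; omega
    · rw [List.any_eq_true]
      rcases hJadj _ _ hJfc with ⟨h1, h2⟩ | ⟨h1, h2⟩ | ⟨h1, h2⟩ | ⟨h1, h2⟩
      · -- East: c = f c + (1,0)
        refine ⟨(W c).v10, mem_allV hWc8.2.1, ?_⟩
        have hcext : extPl dp.1 c dp.2 (W c).v10 = W c := by
          rw [hdpfst, hdpsnd, extPl, if_pos (⟨h1, h2⟩ : c.1 = (f c).1 + 1 ∧ c.2 = (f c).2)]
          obtain ⟨e1, e2⟩ := (hcompat _ _ hJfc).1 ⟨h1, h2⟩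
          rw [e1, e2]
          have : x3 (W c).v10 (W c).v00 (W c).v01 = (W c).v11 := hxid.1
          rw [this]
        rw [hcext]
        simp only [Bool.and_eq_true]
        exact ⟨hvalid c hcpos, hrec⟩
      · -- West: f c = c + (1,0)
        refine ⟨(W c).v00, mem_allV hWc8.1, ?_⟩
        have hcext : extPl dp.1 c dp.2 (W c).v00 = W c := by
          rw [hdpfst, hdpsnd, extPl]
          rw [if_neg (by omega), if_pos (by omega : (f c).1 = c.1 + 1 ∧ c.2 = (f c).2)]
          obtain ⟨e1, e2⟩ := (hcompat _ _ (hJsymm _ _ hJfc)).1 ⟨by omega, by omega⟩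
          rw [← e1, ← e2]
          have : x3 (W c).v00 (W c).v10 (W c).v11 = (W c).v01 := hxid.2.1
          rw [this]
        rw [hcext]
        simp only [Bool.and_eq_true]
        exact ⟨hvalid c hcpos, hrec⟩
      · -- North: c = f c + (0,1)
        refine ⟨(W c).v01, mem_allV hWc8.2.2.1, ?_⟩
        have hcext : extPl dp.1 c dp.2 (W c).v01 = W c := by
          rw [hdpfst, hdpsnd, extPl]
          rw [if_neg (by omega), if_neg (by omega), if_pos (by omega : c.2 = (f c).2 + 1 ∧ c.1 = (f c).1)]
          obtain ⟨e1, e2⟩ := (hcompat _ _ hJfc).2 ⟨by omega, by omega⟩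
          rw [e1, e2]
          have : x3 (W c).v01 (W c).v00 (W c).v10 = (W c).v11 := hxid.2.2.1
          rw [this]
        rw [hcext]
        simp only [Bool.and_eq_true]
        exact ⟨hvalid c hcpos, hrec⟩
      · -- South: f c = c + (0,1)
        refine ⟨(W c).v00, mem_allV hWc8.1, ?_⟩
        have hcext : extPl dp.1 c dp.2 (W c).v00 = W c := by
          rw [hdpfst, hdpsnd, extPl]
          rw [if_neg (by omega), if_neg (by omega), if_neg (by omega)]
          obtain ⟨e1, e2⟩ := (hcompat _ _ (hJsymm _ _ hJfc)).2 ⟨by omega, by omega⟩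
          rw [← e1, ← e2]
          have : x3 (W c).v00 (W c).v01 (W c).v11 = (W c).v10 := hxid.2.2.2
          rw [this]
        rw [hcext]
        simp only [Bool.and_eq_true]
        exact ⟨hvalid c hcpos, hrec⟩

include hvalid h8 hJmem hcompat hJadj hJsymm hpar hfaces in
theorem main_comb (hroot : W (0,0) = ⟨0,1,2,3⟩) : False := by
  have h := go_sound W J dep f hvalid h8 hJmem hcompat hJadj hJsymm hpar hfaces
    5 [((0,0), W (0,0))] restPos rfl ?_
  · rw [hroot] at h
    rw [show (go 5 [((0,0), (⟨0,1,2,3⟩ : Pl))] restPos) = searchTop from rfl,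
      searchTop_false] at h
    exact absurd h (by simp)
  · refine ⟨?_, by simp, by decide, by decide, ?_, ?_, by decide⟩
    · intro cp hcp
      rcases List.mem_singleton.mp hcp with rfl
      exact ⟨show ((0,0) : Pos) ∈ posList by decide, rfl⟩
    · intro c hc
      simp only [List.map_cons, List.map_nil]
      intro h
      rcases List.mem_singleton.mp h with rfl
      revert hc
      decide
    · intro c hc
      simp only [List.map_cons, List.map_nil]
      by_cases h : c = ((0,0) : Pos)
      · right; rw [h]; exact List.mem_singleton.mpr rfl
      · left
        revert hc h
        revert c
        decide


end Sound


/-! ### parent extraction -/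


def reach {α : Type*} (J : α → α → Prop) (r : α) : ℕ → α → Prop
  | 0, c => c = r
  | n+1, c => ∃ b, reach J r n b ∧ J b c

theorem rtg_reach {α : Type*} {J : α → α → Prop} {r c : α}
    (h : Relation.ReflTransGen J r c) : ∃ n, reach J r n c := by
  induction h with
  | refl => exact ⟨0, rfl⟩
  | tail _ hbc ih =>
    obtain ⟨n, hn⟩ := ih
    exact ⟨n + 1, _, hn, hbc⟩

theorem exists_parent {α : Type*} (J : α → α → Prop) (r : α) :
    ∃ (f : α → α) (dep : α → ℕ), ∀ c, c ≠ r → Relation.ReflTransGen J r c →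
      J (f c) c ∧ dep (f c) < dep c := by
  classical
  refine ⟨fun c => if h : ∃ b, (∃ m, reach J r m b ∧
      (∀ m', reach J r m' c → m < m')) ∧ J b c then Classical.choose h else r,
    fun c => if h : ∃ n, reach J r n c then Nat.find h else 0, ?_⟩
  intro c hcr hrtg
  beta_reduce
  have hex : ∃ n, reach J r n c := rtg_reach hrtg
  have hspec := Nat.find_spec hex
  set n := Nat.find hex with hn
  have hn0 : n ≠ 0 := by
    intro h0
    rw [h0] at hspec
    exact hcr hspec
  obtain ⟨m, hm⟩ : ∃ m, n = m + 1 := ⟨n - 1, by omega⟩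
  rw [hm] at hspec
  obtain ⟨b, hb, hJbc⟩ := hspec
  have hbig : ∃ b, (∃ m', reach J r m' b ∧ (∀ m'', reach J r m'' c → m' < m'')) ∧ J b c := by
    refine ⟨b, ⟨m, hb, ?_⟩, hJbc⟩
    intro m'' hm''
    have := Nat.find_min' hex hm''
    omega
  rw [dif_pos hbig]
  obtain ⟨⟨m', hm', hlt⟩, hJ⟩ := Classical.choose_spec hbig
  refine ⟨hJ, ?_⟩
  have hexb : ∃ n, reach J r n (Classical.choose hbig) := ⟨m', hm'⟩
  rw [dif_pos hexb, dif_pos hex]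
  have h1 : Nat.find hexb ≤ m' := Nat.find_le hm'
  have h2 : m' < Nat.find hex := hlt _ (Nat.find_spec hex)
  omega

/-! ### encoding of boolean vectors -/

abbrev BV := Fin 3 → Bool

def bflip (j : Fin 3) (A : BV) : BV := Function.update A j (!A j)

def b2n (b0 b1 b2 : Bool) : ℕ := (cond b0 1 0) + 2 * (cond b1 1 0) + 4 * (cond b2 1 0)

def encF (j0 j1 j2 : Fin 3) (a : BV) (v : BV) : ℕ :=
  b2n (xor (v j0) (a j0)) (xor (v j1) (a j1)) (xor (v j2) (a j2))

def listC (j k : Fin 3) (A : BV) : List BV := [A, bflip j A, bflip k A, bflip j (bflip k A)]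

def sameSetBV (l m : List BV) : Bool := l.all (fun v => v ∈ m) && m.all (fun v => v ∈ l)

def encPl (e : BV → ℕ) (j k : Fin 3) (A : BV) : Pl :=
  ⟨e A, e (bflip j A), e (bflip k A), e (bflip j (bflip k A))⟩

-- D1: validity of encoded placements
theorem enc_valid : ∀ j0 j1 j2 : Fin 3, j0 ≠ j1 → j0 ≠ j2 → j1 ≠ j2 → ∀ a : BV,
    ∀ j k : Fin 3, j ≠ k → ∀ A : BV,
    validB (encPl (encF j0 j1 j2 a) j k A) = true := by decide

-- D2: root placement is canonical
theorem enc_root : ∀ j0 j1 j2 : Fin 3, j0 ≠ j1 → j0 ≠ j2 → j1 ≠ j2 → ∀ a : BV,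
    encPl (encF j0 j1 j2 a) j0 j1 a = ⟨0, 1, 2, 3⟩ := by decide

-- D3: injectivity of the encoding
theorem enc_inj : ∀ j0 j1 j2 : Fin 3, j0 ≠ j1 → j0 ≠ j2 → j1 ≠ j2 → ∀ a v w : BV,
    encF j0 j1 j2 a v = encF j0 j1 j2 a w → v = w := by decide

-- D4: bound
theorem enc_lt : ∀ j0 j1 j2 : Fin 3, ∀ a v : BV, encF j0 j1 j2 a v < 8 := by decide

-- D5: distinct faces have distinct corner sets
theorem face_distinct : ∀ i j k : Fin 3, i ≠ j → i ≠ k → j ≠ k →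
    ∀ i' j' k' : Fin 3, i' ≠ j' → i' ≠ k' → j' ≠ k' → ∀ A A' : BV,
    (i, A i) ≠ (i', A' i') → sameSetBV (listC j k A) (listC j' k' A') = false := by decide

-- bridge: sameSet of encoded placements equals sameSetBV
theorem sameSet_enc (e : BV → ℕ) (he : Function.Injective e)
    (j k j' k' : Fin 3) (A A' : BV) :
    sameSet (encPl e j k A) (encPl e j' k' A') = sameSetBV (listC j k A) (listC j' k' A') := by
  have hmem : ∀ (x : BV) (l : List BV), (e x ∈ l.map e) = (x ∈ l) := by
    intro x l
    simp only [List.mem_map]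
    apply propext
    constructor
    · rintro ⟨y, hy, hxy⟩; rwa [he hxy] at hy
    · intro hx; exact ⟨x, hx, rfl⟩
  have hc : ∀ (j k : Fin 3) (A : BV), corners (encPl e j k A) = (listC j k A).map e := by
    intro j k A; rfl
  have key : ∀ (l m : List BV), ((l.map e).all fun v => v ∈ m.map e) = (l.all fun v => v ∈ m) := by
    intro l m
    induction l with
    | nil => rfl
    | cons x l ih => simp only [List.map_cons, List.all_cons, ih, hmem]
  simp only [sameSet, sameSetBV, hc, key]

theorem flip_comm {j k : Fin 3} (h : j ≠ k) (A : BV) : bflip j (bflip k A) = bflip k (bflip j A) := by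
  unfold bflip
  rw [Function.update_of_ne h.symm, Function.update_of_ne h, Function.update_comm h]


end Comb
namespace Geo

open Comb


def bval (b : Bool) : ℝ := if b then 1 else 0

def bvec (p : R3) : BV := fun l => if p l = 1 then true else false

theorem mk2_0 (s t : ℝ) : mk2 s t 0 = s := rfl
theorem mk2_1 (s t : ℝ) : mk2 s t 1 = t := rfl

theorem mem_unitSq {s t : ℝ} (h0 : 0 ≤ s) (h1 : s ≤ 1) (h2 : 0 ≤ t) (h3 : t ≤ 1) :
    mk2 s t ∈ unitSq := ⟨h0, h1, h2, h3⟩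

theorem dist_sq_R2 (x y : R2) : dist x y ^ 2 = (x 0 - y 0)^2 + (x 1 - y 1)^2 := by
  rw [EuclideanSpace.dist_eq, Real.sq_sqrt (by positivity)]
  simp [Fin.sum_univ_two, Real.dist_eq, sq_abs]

theorem norm_sq_R3 (w : R3) : ‖w‖ ^ 2 = w 0^2 + w 1^2 + w 2^2 := by
  rw [EuclideanSpace.norm_eq, Real.sq_sqrt (by positivity)]
  simp [Fin.sum_univ_three, Real.norm_eq_abs, sq_abs]

theorem inner_R3 (w z : R3) : (inner ℝ w z : ℝ) = w 0 * z 0 + w 1 * z 1 + w 2 * z 2 := by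
  rw [PiLp.inner_apply]
  simp [Fin.sum_univ_three, RCLike.inner_apply, conj_trivial]
  ring

/-- determination of a bit flip -/
theorem bit01 {α βv s : ℝ} (hα0 : 0 ≤ α) (hα1 : α ≤ 1) (hβ0 : 0 ≤ βv) (hβ1 : βv ≤ 1)
    (hs : s^2 = 1) (he : βv = α + s) :
    (α = 0 ∨ α = 1) ∧ (if βv = 1 then true else false) = !(if α = 1 then true else false) := by
  have : (s - 1) * (s + 1) = 0 := by nlinarith
  rcases mul_eq_zero.mp this with h | h
  · have hs1 : s = 1 := by linarith
    have hα : α = 0 := by linarith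
    have hβ : βv = 1 := by linarith
    subst hα; subst hβ
    norm_num
  · have hs1 : s = -1 := by linarith
    have hα : α = 1 := by linarith
    have hβ : βv = 0 := by linarith
    subst hα; subst hβ
    norm_num


theorem bflip_same (j : Fin 3) (A : BV) : bflip j A j = !A j :=
  Function.update_self _ _ _

theorem bflip_other {l j : Fin 3} (h : l ≠ j) (A : BV) : bflip j A l = A l :=
  Function.update_of_ne h _ _

theorem support_helper {p1 p2 q1 q2 : ℝ}
    (hs1 : p1^2 + p2^2 = 1) (hs2 : q1^2 + q2^2 = 1)
    (k1 : p1^2 + q1^2 + 2*|p1*q1| ≤ 1) (k2 : p2^2 + q2^2 + 2*|p2*q2| ≤ 1) :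
    (p1^2 = 1 ∧ q1 = 0 ∧ q2^2 = 1 ∧ p2 = 0) ∨ (p2^2 = 1 ∧ q2 = 0 ∧ q1^2 = 1 ∧ p1 = 0) := by
  have hA := abs_nonneg (p1 * q1)
  have hB := abs_nonneg (p2 * q2)
  have hA0 : |p1 * q1| = 0 := le_antisymm (by linarith) hA
  have hB0 : |p2 * q2| = 0 := le_antisymm (by linarith) hB
  have hp1 : p1 * q1 = 0 := abs_eq_zero.mp hA0
  have hp2 : p2 * q2 = 0 := abs_eq_zero.mp hB0
  rw [hA0] at k1
  rw [hB0] at k2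
  have he1 : p1^2 + q1^2 = 1 := by linarith
  have he2 : p2^2 + q2^2 = 1 := by linarith
  rcases mul_eq_zero.mp hp1 with h | h
  · right
    have hp1sq : p1^2 = 0 := by rw [h]; ring
    have hq1 : q1^2 = 1 := by linarith
    have hp2sq : p2^2 = 1 := by linarith
    have hp2ne : p2 ≠ 0 := by
      intro h0
      rw [h0] at hp2sq
      norm_num at hp2sq
    exact ⟨hp2sq, (mul_eq_zero.mp hp2).resolve_left hp2ne, hq1, h⟩
  · left
    have hq1sq : q1^2 = 0 := by rw [h]; ring
    have hp1sq : p1^2 = 1 := by linarith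
    have hq2 : q2^2 = 1 := by linarith
    have hq2ne : q2 ≠ 0 := by
      intro h0
      rw [h0] at hq2
      norm_num at hq2
    exact ⟨hp1sq, h, hq2, (mul_eq_zero.mp hp2).resolve_right hq2ne⟩

set_option maxHeartbeats 2000000 in
theorem square_in_cube
    (g : R2 → R3)
    (hiso : ∀ x ∈ unitSq, ∀ y ∈ unitSq, dist (g x) (g y) = dist x y)
    (hsurf : ∀ x ∈ unitSq, g x ∈ cubeSurface) :
    ∃ (i j k : Fin 3), i ≠ j ∧ i ≠ k ∧ j ≠ k ∧
      (∀ x ∈ unitSq, g x i = bval (bvec (g (mk2 0 0)) i)) ∧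
      bvec (g (mk2 1 0)) = bflip j (bvec (g (mk2 0 0))) ∧
      bvec (g (mk2 0 1)) = bflip k (bvec (g (mk2 0 0))) ∧
      bvec (g (mk2 1 1)) = bflip j (bflip k (bvec (g (mk2 0 0)))) := by
  have h00 : mk2 0 0 ∈ unitSq := mem_unitSq le_rfl zero_le_one le_rfl zero_le_one
  have h10 : mk2 1 0 ∈ unitSq := mem_unitSq zero_le_one le_rfl le_rfl zero_le_one
  have h01 : mk2 0 1 ∈ unitSq := mem_unitSq le_rfl zero_le_one zero_le_one le_rfl
  have h11 : mk2 1 1 ∈ unitSq := mem_unitSq zero_le_one le_rfl zero_le_one le_rfl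
  set a := g (mk2 0 0) with ha
  set bb := g (mk2 1 0) with hbb
  set cc := g (mk2 0 1) with hcc
  set u : R3 := bb - a with hu
  set v : R3 := cc - a with hv
  -- squared distances to the three corners
  have key : ∀ x ∈ unitSq, ‖g x - a‖^2 = (x 0)^2 + (x 1)^2 ∧
      ‖g x - bb‖^2 = (x 0 - 1)^2 + (x 1)^2 ∧ ‖g x - cc‖^2 = (x 0)^2 + (x 1 - 1)^2 := by
    intro x hx
    refine ⟨?_, ?_, ?_⟩
    · rw [← dist_eq_norm, hiso x hx _ h00, dist_sq_R2]
      simp [mk2_0, mk2_1]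
    · rw [← dist_eq_norm, hiso x hx _ h10, dist_sq_R2]
      simp [mk2_0, mk2_1]
    · rw [← dist_eq_norm, hiso x hx _ h01, dist_sq_R2]
      simp [mk2_0, mk2_1]
  have hnu : ‖u‖^2 = 1 := by
    have := (key _ h10).1
    rw [← hbb] at this
    rw [hu, this]
    norm_num [mk2_0, mk2_1]
  have hnv : ‖v‖^2 = 1 := by
    have := (key _ h01).1
    rw [← hcc] at this
    rw [hv, this]
    norm_num [mk2_0, mk2_1]
  have huv : (inner ℝ u v : ℝ) = 0 := by
    have h2 : ‖u - v‖^2 = 2 := by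
      have : u - v = bb - cc := by rw [hu, hv]; abel
      rw [this, ← dist_eq_norm, hiso _ h10 _ h01, dist_sq_R2]
      norm_num [mk2_0, mk2_1]
    have := norm_sub_sq_real u v
    rw [h2, hnu, hnv] at this
    linarith
  -- the affine formula
  have main : ∀ x ∈ unitSq, g x = a + x 0 • u + x 1 • v := by
    intro x hx
    obtain ⟨k1, k2, k3⟩ := key x hx
    have hb' : bb = a + u := by rw [hu]; abel
    have hc' : cc = a + v := by rw [hv]; abel
    have hpu : (inner ℝ (g x - a) u : ℝ) = x 0 := by
      have hsub : g x - a - u = g x - bb := by rw [hb']; abel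
      have := norm_sub_sq_real (g x - a) u
      rw [hsub, k2, k1, hnu] at this
      nlinarith [this]
    have hpv : (inner ℝ (g x - a) v : ℝ) = x 1 := by
      have hsub : g x - a - v = g x - cc := by rw [hc']; abel
      have := norm_sub_sq_real (g x - a) v
      rw [hsub, k3, k1, hnv] at this
      nlinarith [this]
    have hz : ‖g x - (a + x 0 • u + x 1 • v)‖^2 = 0 := by
      have hre : g x - (a + x 0 • u + x 1 • v) = (g x - a) - (x 0 • u + x 1 • v) := by abel
      rw [hre, norm_sub_sq_real]
      have e1 : (inner ℝ (g x - a) (x 0 • u + x 1 • v) : ℝ) = x 0 * x 0 + x 1 * x 1 := by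
        rw [inner_add_right, real_inner_smul_right, real_inner_smul_right, hpu, hpv]
      have e2 : ‖x 0 • u + x 1 • v‖^2 = x 0 ^ 2 + x 1 ^ 2 := by
        rw [norm_add_sq_real, real_inner_smul_left, real_inner_smul_right, huv]
        rw [norm_smul, norm_smul]
        simp only [Real.norm_eq_abs]
        rw [mul_pow, mul_pow, sq_abs, sq_abs, hnu, hnv]
        ring
      rw [e1, e2, k1]
      ring
    have hnz : ‖g x - (a + x 0 • u + x 1 • v)‖ = 0 := by
      nlinarith [hz, norm_nonneg (g x - (a + x 0 • u + x 1 • v))]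
    exact sub_eq_zero.mp (norm_eq_zero.mp hnz)
  have coords : ∀ x ∈ unitSq, ∀ l, g x l = a l + x 0 * u l + x 1 * v l := by
    intro x hx l
    rw [main x hx]
    simp [PiLp.add_apply, PiLp.smul_apply, smul_eq_mul]
  -- the face coordinate
  have hface : ∃ i : Fin 3, u i = 0 ∧ v i = 0 ∧ (a i = 0 ∨ a i = 1) := by
    by_contra hno
    push_neg at hno
    set badT : Set ℝ :=
      {t | ∃ i : Fin 3, u i ≠ 0 ∧ v i = 0 ∧ (a i + t * u i = 0 ∨ a i + t * u i = 1)} with hbadTdef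
    have hfinT : badT.Finite := by
      apply Set.Finite.subset (Set.finite_iUnion
        (fun i : Fin 3 => ((Set.finite_singleton ((0 - a i)/u i)).insert ((1 - a i)/u i))))
      rintro t ⟨i, hui, hvi, hcase⟩
      apply Set.mem_iUnion.mpr
      refine ⟨i, ?_⟩
      rcases hcase with h | h
      · right
        rw [Set.mem_singleton_iff, eq_div_iff hui]
        linarith
      · left
        rw [eq_div_iff hui]
        linarith
    obtain ⟨t, ht⟩ := ((Set.Icc_infinite (by norm_num : (0:ℝ) < 1)).diff hfinT).nonempty
    obtain ⟨htIcc, htbad⟩ := ht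
    set badS : Set ℝ :=
      {s | ∃ i : Fin 3, v i ≠ 0 ∧ (a i + t * u i + s * v i = 0 ∨ a i + t * u i + s * v i = 1)}
      with hbadSdef
    have hfinS : badS.Finite := by
      apply Set.Finite.subset (Set.finite_iUnion
        (fun i : Fin 3 => ((Set.finite_singleton ((0 - a i - t * u i)/v i)).insert
          ((1 - a i - t * u i)/v i))))
      rintro s ⟨i, hvi, hcase⟩
      apply Set.mem_iUnion.mpr
      refine ⟨i, ?_⟩
      rcases hcase with h | h
      · right
        rw [Set.mem_singleton_iff, eq_div_iff hvi]
        linarith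
      · left
        rw [eq_div_iff hvi]
        linarith
    have hsub : Set.Icc (0:ℝ) 1 ⊆ badS := by
      intro s hs
      have hxmem : mk2 t s ∈ unitSq := mem_unitSq htIcc.1 htIcc.2 hs.1 hs.2
      obtain ⟨i, hi⟩ := (hsurf _ hxmem).2
      have hg : g (mk2 t s) i = a i + t * u i + s * v i := by
        rw [coords _ hxmem i, mk2_0, mk2_1]
      rw [hg] at hi
      by_cases hvi : v i = 0
      · by_cases hui : u i = 0
        · obtain ⟨hn0, hn1⟩ := hno i hui hvi
          rw [hui, hvi] at hi
          exfalso
          rcases hi with h | h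
          · exact hn0 (by linarith)
          · exact hn1 (by linarith)
        · refine absurd (?_ : t ∈ badT) htbad
          refine ⟨i, hui, hvi, ?_⟩
          rw [hvi] at hi
          rcases hi with h | h
          · left; linarith
          · right; linarith
      · exact ⟨i, hvi, hi⟩
    exact (Set.Icc_infinite (by norm_num : (0:ℝ) < 1)).mono hsub hfinS
  obtain ⟨i, hui, hvi, hai⟩ := hface
  -- coordinate sums
  have hsum_u : u 0^2 + u 1^2 + u 2^2 = 1 := by rw [← norm_sq_R3]; exact hnu
  have hsum_v : v 0^2 + v 1^2 + v 2^2 = 1 := by rw [← norm_sq_R3]; exact hnv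
  have hsum_uv : u 0 * v 0 + u 1 * v 1 + u 2 * v 2 = 0 := by rw [← inner_R3]; exact huv
  -- corner coordinates
  have ea : ∀ l, a l = g (mk2 0 0) l := fun l => rfl
  have eb : ∀ l, bb l = a l + u l := by
    intro l
    have := coords _ h10 l
    rw [← hbb] at this
    rw [this, mk2_0, mk2_1]
    ring
  have ec : ∀ l, cc l = a l + v l := by
    intro l
    have := coords _ h01 l
    rw [← hcc] at this
    rw [this, mk2_0, mk2_1]
    ring
  have ed : ∀ l, g (mk2 1 1) l = a l + u l + v l := by
    intro l
    rw [coords _ h11 l, mk2_0, mk2_1]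
    ring
  -- bounds on corner coordinates
  have hbnd : ∀ l, (0 ≤ a l ∧ a l ≤ 1) ∧ (0 ≤ a l + u l ∧ a l + u l ≤ 1) ∧
      (0 ≤ a l + v l ∧ a l + v l ≤ 1) ∧ (0 ≤ a l + u l + v l ∧ a l + u l + v l ≤ 1) := by
    intro l
    have c00 := (hsurf _ h00).1 l
    have c10 := (hsurf _ h10).1 l
    have c01 := (hsurf _ h01).1 l
    have c11 := (hsurf _ h11).1 l
    rw [← hbb] at c10
    rw [← hcc] at c01
    rw [eb l] at c10
    rw [ec l] at c01
    rw [ed l] at c11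
    exact ⟨c00, c10, c01, c11⟩
  have hK : ∀ l, u l^2 + v l^2 + 2*|u l * v l| ≤ 1 := by
    intro l
    obtain ⟨⟨b1,b2⟩,⟨b3,b4⟩,⟨b5,b6⟩,⟨b7,b8⟩⟩ := hbnd l
    rcases abs_cases (u l * v l) with ⟨habs, _⟩ | ⟨habs, _⟩ <;> rw [habs] <;> nlinarith
  -- support of u and v
  have hsupp : ∃ j k : Fin 3, i ≠ j ∧ i ≠ k ∧ j ≠ k ∧
      u j^2 = 1 ∧ v j = 0 ∧ v k^2 = 1 ∧ u k = 0 := by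
    have hi3 : i = 0 ∨ i = 1 ∨ i = 2 := by
      have h1 := i.isLt
      have : i.val = 0 ∨ i.val = 1 ∨ i.val = 2 := by omega
      rcases this with h | h | h
      exacts [Or.inl (Fin.ext h), Or.inr (Or.inl (Fin.ext h)), Or.inr (Or.inr (Fin.ext h))]
    rcases hi3 with h | h | h <;> subst h
    · -- i = 0
      have hs1 : u 1^2 + u 2^2 = 1 := by
        have h0 : u 0^2 = 0 := by rw [hui]; ring
        linarith [hsum_u]
      have hs2 : v 1^2 + v 2^2 = 1 := by
        have h0 : v 0^2 = 0 := by rw [hvi]; ring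
        linarith [hsum_v]
      rcases support_helper hs1 hs2 (hK 1) (hK 2) with ⟨c1, c2, c3, c4⟩ | ⟨c1, c2, c3, c4⟩
      · exact ⟨1, 2, by decide, by decide, by decide, c1, c2, c3, c4⟩
      · exact ⟨2, 1, by decide, by decide, by decide, c1, c2, c3, c4⟩
    · -- i = 1
      have hs1 : u 0^2 + u 2^2 = 1 := by
        have h0 : u 1^2 = 0 := by rw [hui]; ring
        linarith [hsum_u]
      have hs2 : v 0^2 + v 2^2 = 1 := by
        have h0 : v 1^2 = 0 := by rw [hvi]; ring
        linarith [hsum_v]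
      rcases support_helper hs1 hs2 (hK 0) (hK 2) with ⟨c1, c2, c3, c4⟩ | ⟨c1, c2, c3, c4⟩
      · exact ⟨0, 2, by decide, by decide, by decide, c1, c2, c3, c4⟩
      · exact ⟨2, 0, by decide, by decide, by decide, c1, c2, c3, c4⟩
    · -- i = 2
      have hs1 : u 0^2 + u 1^2 = 1 := by
        have h0 : u 2^2 = 0 := by rw [hui]; ring
        linarith [hsum_u]
      have hs2 : v 0^2 + v 1^2 = 1 := by
        have h0 : v 2^2 = 0 := by rw [hvi]; ring
        linarith [hsum_v]
      rcases support_helper hs1 hs2 (hK 0) (hK 1) with ⟨c1, c2, c3, c4⟩ | ⟨c1, c2, c3, c4⟩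
      · exact ⟨0, 1, by decide, by decide, by decide, c1, c2, c3, c4⟩
      · exact ⟨1, 0, by decide, by decide, by decide, c1, c2, c3, c4⟩
  obtain ⟨j, k, hij, hik, hjk, hju, hjv, hkv, hku⟩ := hsupp
  have htri : ∀ l : Fin 3, l = i ∨ l = j ∨ l = k := by
    intro l
    have h1 := i.isLt
    have h2 := j.isLt
    have h3 := k.isLt
    have h4 := l.isLt
    have hij' : i.val ≠ j.val := fun h => hij (Fin.ext h)
    have hik' : i.val ≠ k.val := fun h => hik (Fin.ext h)
    have hjk' : j.val ≠ k.val := fun h => hjk (Fin.ext h)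
    have : l.val = i.val ∨ l.val = j.val ∨ l.val = k.val := by omega
    rcases this with h | h | h
    · exact Or.inl (Fin.ext h)
    · exact Or.inr (Or.inl (Fin.ext h))
    · exact Or.inr (Or.inr (Fin.ext h))
  refine ⟨i, j, k, hij, hik, hjk, ?_, ?_, ?_, ?_⟩
  · -- face constancy
    intro x hx
    rw [coords x hx i, hui, hvi]
    have : a i + x 0 * 0 + x 1 * 0 = a i := by ring
    rw [this]
    rcases hai with h | h <;> rw [show bvec (g (mk2 0 0)) i = bvec a i from rfl] <;>
      simp [bvec, bval, h]
  · -- corner (1,0)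
    funext l
    rcases htri l with h | h | h <;> rw [h]
    · rw [bflip_other hij]
      show (if bb i = 1 then true else false) = (if a i = 1 then true else false)
      rw [eb i, hui, add_zero]
    · rw [bflip_same]
      obtain ⟨⟨b1,b2⟩,⟨b3,b4⟩,_,_⟩ := hbnd j
      show (if bb j = 1 then true else false) = !(if a j = 1 then true else false)
      rw [eb j]
      exact (bit01 b1 b2 b3 b4 hju rfl).2
    · rw [bflip_other (Ne.symm hjk)]
      show (if bb k = 1 then true else false) = (if a k = 1 then true else false)
      rw [eb k, hku, add_zero]
  · -- corner (0,1)
    funext l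
    rcases htri l with h | h | h <;> rw [h]
    · rw [bflip_other hik]
      show (if cc i = 1 then true else false) = (if a i = 1 then true else false)
      rw [ec i, hvi, add_zero]
    · rw [bflip_other hjk]
      show (if cc j = 1 then true else false) = (if a j = 1 then true else false)
      rw [ec j, hjv, add_zero]
    · rw [bflip_same]
      obtain ⟨⟨b1,b2⟩,_,⟨b5,b6⟩,_⟩ := hbnd k
      show (if cc k = 1 then true else false) = !(if a k = 1 then true else false)
      rw [ec k]
      exact (bit01 b1 b2 b5 b6 hkv rfl).2
  · -- corner (1,1)
    funext l
    rcases htri l with h | h | h <;> rw [h]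
    · rw [show bflip j (bflip k (bvec a)) i = bvec a i from by
        rw [bflip_other hij, bflip_other hik]]
      show (if g (mk2 1 1) i = 1 then true else false) = (if a i = 1 then true else false)
      rw [ed i, hui, hvi, add_zero, add_zero]
    · rw [show bflip j (bflip k (bvec a)) j = !(bvec a j) from by
        rw [bflip_same, bflip_other hjk]]
      obtain ⟨⟨b1,b2⟩,⟨b3,b4⟩,_,_⟩ := hbnd j
      show (if g (mk2 1 1) j = 1 then true else false) = !(if a j = 1 then true else false)
      have hedj : g (mk2 1 1) j = a j + u j := by rw [ed j, hjv, add_zero]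
      rw [hedj]
      exact (bit01 b1 b2 b3 b4 hju rfl).2
    · rw [show bflip j (bflip k (bvec a)) k = !(bvec a k) from by
        rw [bflip_other (Ne.symm hjk), bflip_same]]
      obtain ⟨⟨b1,b2⟩,_,⟨b5,b6⟩,_⟩ := hbnd k
      show (if g (mk2 1 1) k = 1 then true else false) = !(if a k = 1 then true else false)
      have hedk : g (mk2 1 1) k = a k + v k := by
        rw [ed k, hku]
        ring
      rw [hedk]
      exact (bit01 b1 b2 b5 b6 hkv rfl).2


end Geo

namespace Geo

open Comb

theorem m00 : mk2 0 0 ∈ unitSq := mem_unitSq le_rfl zero_le_one le_rfl zero_le_one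
theorem m10 : mk2 1 0 ∈ unitSq := mem_unitSq zero_le_one le_rfl le_rfl zero_le_one
theorem m01 : mk2 0 1 ∈ unitSq := mem_unitSq le_rfl zero_le_one zero_le_one le_rfl
theorem m11 : mk2 1 1 ∈ unitSq := mem_unitSq zero_le_one le_rfl zero_le_one le_rfl

theorem mem_posList_iff (q : Comb.Pos) : q ∈ Comb.posList ↔ q.1 < 3 ∧ q.2 < 2 := by
  constructor
  · intro h
    rcases q with ⟨q1, q2⟩
    simp only [Comb.posList, List.mem_cons, List.not_mem_nil, or_false, Prod.mk.injEq] at h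
    rcases h with ⟨h1, h2⟩ | ⟨h1, h2⟩ | ⟨h1, h2⟩ | ⟨h1, h2⟩ | ⟨h1, h2⟩ | ⟨h1, h2⟩ <;>
      subst h1 <;> subst h2 <;> omega
  · rintro ⟨h1, h2⟩
    rcases q with ⟨q1, q2⟩
    simp only at h1 h2
    interval_cases q1 <;> interval_cases q2 <;> decide

theorem bridge
    (C00 C10 C01 C11 : Comb.Pos → BV)
    (fm : Comb.Pos → Fin 3 × Bool)
    (J : Comb.Pos → Comb.Pos → Prop)
    (hstruct : ∀ q ∈ Comb.posList, ∃ j k : Fin 3, (fm q).1 ≠ j ∧ (fm q).1 ≠ k ∧ j ≠ k ∧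
      C10 q = bflip j (C00 q) ∧ C01 q = bflip k (C00 q) ∧
      C11 q = bflip j (bflip k (C00 q)) ∧ C00 q (fm q).1 = (fm q).2)
    (hfm : ∀ q ∈ Comb.posList, ∀ q' ∈ Comb.posList, q ≠ q' → fm q ≠ fm q')
    (hJmem : ∀ a b, J a b → a ∈ Comb.posList ∧ b ∈ Comb.posList)
    (hJadj : ∀ a b, J a b → (b.1 = a.1+1 ∧ b.2 = a.2) ∨ (a.1 = b.1+1 ∧ a.2 = b.2) ∨
        (b.2 = a.2+1 ∧ b.1 = a.1) ∨ (a.2 = b.2+1 ∧ a.1 = b.1))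
    (hJsymm : ∀ a b, J a b → J b a)
    (hcompatCV : ∀ a b, J a b →
      (b.1 = a.1+1 ∧ b.2 = a.2 → C10 a = C00 b ∧ C11 a = C01 b) ∧
      (b.2 = a.2+1 ∧ b.1 = a.1 → C01 a = C00 b ∧ C11 a = C10 b))
    (hconn : ∀ q ∈ Comb.posList, Relation.ReflTransGen J ((0,0) : Comb.Pos) q) : False := by
  classical
  have hstruct' : ∀ q, ∃ j k : Fin 3, q ∈ Comb.posList →
      ((fm q).1 ≠ j ∧ (fm q).1 ≠ k ∧ j ≠ k ∧
      C10 q = bflip j (C00 q) ∧ C01 q = bflip k (C00 q) ∧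
      C11 q = bflip j (bflip k (C00 q)) ∧ C00 q (fm q).1 = (fm q).2) := by
    intro q
    by_cases hq : q ∈ Comb.posList
    · obtain ⟨j, k, hp⟩ := hstruct q hq
      exact ⟨j, k, fun _ => hp⟩
    · exact ⟨0, 1, fun h => absurd h hq⟩
  choose cj ck hcd using hstruct'
  have hm00 : ((0,0) : Comb.Pos) ∈ Comb.posList := by decide
  obtain ⟨r1, r2, r3, r4, r5, r6, r7⟩ := hcd (0,0) hm00
  set e : BV → ℕ := encF (cj (0,0)) (ck (0,0)) (fm (0,0)).1 (C00 (0,0)) with he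
  have heinj : Function.Injective e := fun v w hvw =>
    enc_inj _ _ _ r3 (Ne.symm r1) (Ne.symm r2) _ v w hvw
  set W : Comb.Pos → Pl := fun q => encPl e (cj q) (ck q) (C00 q) with hW
  obtain ⟨f, dep, hparent⟩ := exists_parent J ((0,0) : Comb.Pos)
  have hfields : ∀ q ∈ Comb.posList, (W q).v00 = e (C00 q) ∧ (W q).v10 = e (C10 q) ∧
      (W q).v01 = e (C01 q) ∧ (W q).v11 = e (C11 q) := by
    intro q hq
    obtain ⟨_, _, _, h4, h5, h6, _⟩ := hcd q hq
    refine ⟨rfl, ?_, ?_, ?_⟩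
    · exact (congrArg e h4).symm
    · exact (congrArg e h5).symm
    · exact (congrArg e h6).symm
  apply main_comb W J dep f
  · -- hvalid
    intro q hq
    obtain ⟨_, _, h3, _, _, _, _⟩ := hcd q hq
    exact enc_valid (cj (0,0)) (ck (0,0)) (fm (0,0)).1 r3 (Ne.symm r1) (Ne.symm r2)
      (C00 (0,0)) (cj q) (ck q) h3 (C00 q)
  · -- h8
    intro q hq
    obtain ⟨e1, e2, e3, e4⟩ := hfields q hq
    rw [e1, e2, e3, e4]
    exact ⟨enc_lt _ _ _ _ _, enc_lt _ _ _ _ _, enc_lt _ _ _ _ _, enc_lt _ _ _ _ _⟩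
  · -- hJmem
    exact hJmem
  · -- hcompat
    intro a b hJab
    obtain ⟨ha1, hb1⟩ := hJmem a b hJab
    obtain ⟨fa1, fa2, fa3, fa4⟩ := hfields a ha1
    obtain ⟨fb1, fb2, fb3, fb4⟩ := hfields b hb1
    constructor
    · rintro ⟨h1, h2⟩
      obtain ⟨ea1, ea2⟩ := (hcompatCV a b hJab).1 ⟨h1, h2⟩
      constructor
      · rw [fa2, fb1, ea1]
      · rw [fa4, fb3, ea2]
    · rintro ⟨h1, h2⟩
      obtain ⟨ea1, ea2⟩ := (hcompatCV a b hJab).2 ⟨h1, h2⟩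
      constructor
      · rw [fa3, fb1, ea1]
      · rw [fa4, fb2, ea2]
  · -- hJadj
    exact hJadj
  · -- hJsymm
    exact hJsymm
  · -- hpar
    exact fun c hne hc => hparent c hne (hconn c hc)
  · -- hfaces
    intro q hq q' hq' hne
    have hss : sameSet (W q) (W q') =
        sameSetBV (listC (cj q) (ck q) (C00 q)) (listC (cj q') (ck q') (C00 q')) :=
      sameSet_enc e heinj _ _ _ _ _ _
    rw [hss]
    obtain ⟨h1, h2, h3, _, _, _, h7⟩ := hcd q hq
    obtain ⟨h1', h2', h3', _, _, _, h7'⟩ := hcd q' hq'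
    apply face_distinct (fm q).1 (cj q) (ck q) h1 h2 h3 (fm q').1 (cj q') (ck q') h1' h2' h3'
    rw [h7, h7', Prod.mk.eta, Prod.mk.eta]
    exact hfm q hq q' hq' hne
  · -- hroot
    exact enc_root (cj (0,0)) (ck (0,0)) (fm (0,0)).1 r3 (Ne.symm r1) (Ne.symm r2) (C00 (0,0))

end Geo

/-- No tree-shaped polyomino of bounding size `2 × n` with `n ≤ 3` folds
onto the surface of the unit cube. -/
theorem treeShaped_2xn_small_not_foldable (P : Polyomino) (htree : TreeShaped P)
    (x0 y0 : ℤ) (w h : ℕ) (hbb : HasBoundingBox P x0 y0 w h)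
    (hsize : (h = 2 ∧ w ≤ 3) ∨ (w = 2 ∧ h ≤ 3)) :
    ¬ FoldsOntoCube P := by
  classical
  rintro ⟨F, hF, β, hβ, hrange, hcorr⟩
  -- per-cell structure data
  have hcell : ∀ c : Cell, ∃ (i j k : Fin 3) (A : Comb.BV),
      c ∈ P.cells →
      ((i ≠ j ∧ i ≠ k ∧ j ≠ k) ∧
      (∀ (hc : c ∈ P.cells) (x : R2) (hx : x ∈ unitSq),
        β (pt P c hc x hx) i = Geo.bval (A i)) ∧
      (∀ (hc : c ∈ P.cells),
        Geo.bvec (β (pt P c hc (mk2 0 0) Geo.m00)) = A ∧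
        Geo.bvec (β (pt P c hc (mk2 1 0) Geo.m10)) = Comb.bflip j A ∧
        Geo.bvec (β (pt P c hc (mk2 0 1) Geo.m01)) = Comb.bflip k A ∧
        Geo.bvec (β (pt P c hc (mk2 1 1) Geo.m11)) = Comb.bflip j (Comb.bflip k A))) := by
    intro c
    by_cases hc : c ∈ P.cells
    · set g : R2 → R3 := fun x => if hx : x ∈ unitSq then β (pt P c hc x hx) else 0 with hg
      have hiso : ∀ x ∈ unitSq, ∀ y ∈ unitSq, dist (g x) (g y) = dist x y := by
        intro x hx y hy
        rw [hg]
        simp only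
        rw [dif_pos hx, dif_pos hy]
        exact hβ c hc x y hx hy
      have hsurf : ∀ x ∈ unitSq, g x ∈ cubeSurface := by
        intro x hx
        rw [hg]
        simp only
        rw [dif_pos hx, ← hrange]
        exact Set.mem_range_self _
      obtain ⟨i, j, k, hij, hik, hjk, hconst, e10, e01, e11⟩ := Geo.square_in_cube g hiso hsurf
      refine ⟨i, j, k, Geo.bvec (g (mk2 0 0)), fun _ => ⟨⟨hij, hik, hjk⟩, ?_, ?_⟩⟩
      · intro hc' x hx
        have hgx : g x = β (pt P c hc' x hx) := dif_pos hx
        rw [← hgx]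
        exact hconst x hx
      · intro hc'
        have g00 : g (mk2 0 0) = β (pt P c hc' (mk2 0 0) Geo.m00) := dif_pos Geo.m00
        have g10 : g (mk2 1 0) = β (pt P c hc' (mk2 1 0) Geo.m10) := dif_pos Geo.m10
        have g01 : g (mk2 0 1) = β (pt P c hc' (mk2 0 1) Geo.m01) := dif_pos Geo.m01
        have g11 : g (mk2 1 1) = β (pt P c hc' (mk2 1 1) Geo.m11) := dif_pos Geo.m11
        rw [← g00, ← g10, ← g01, ← g11]
        exact ⟨rfl, e10, e01, e11⟩
    · exact ⟨0, 1, 2, fun _ => false, fun h => absurd h hc⟩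
  choose fI fJ fK fA hdata using hcell
  -- the face map
  set fm' : Cell → Fin 3 × Bool := fun c => (fI c, fA c (fI c)) with hfm'
  -- surjectivity of the face map
  have hsurj : ∀ fb : Fin 3 × Bool, ∃ c ∈ P.cells, fm' c = fb := by
    intro fb
    set ctr : R3 := WithLp.toLp 2 (fun l => if l = fb.1 then Geo.bval fb.2 else 1/2 : Fin 3 → ℝ) with hctr
    have hctrmem : ctr ∈ cubeSurface := by
      constructor
      · intro l
        rw [hctr]
        simp only [PiLp.toLp_apply]
        by_cases hl : l = fb.1
        · rw [if_pos hl]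
          cases fb.2 <;> simp [Geo.bval]
        · rw [if_neg hl]
          norm_num
      · refine ⟨fb.1, ?_⟩
        rw [hctr]
        simp only [PiLp.toLp_apply, if_pos rfl]
        cases fb.2 <;> simp [Geo.bval]
    have : ctr ∈ Set.range β := by rw [hrange]; exact hctrmem
    obtain ⟨z, hz⟩ := this
    obtain ⟨⟨⟨c, hc⟩, ⟨x, hx⟩⟩, hrep⟩ := Quot.exists_rep z
    have hβz : β (pt P c hc x hx) = ctr := by
      rw [show pt P c hc x hx = z from hrep, hz]
    have hconst := (hdata c hc).2.1 hc x hx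
    rw [hβz] at hconst
    -- hconst : ctr (fI c) = Geo.bval (fA c (fI c))
    have hIc : fI c = fb.1 := by
      by_contra hne
      have h2 : ctr (fI c) = 1/2 := by
        simp only [hctr, PiLp.toLp_apply]
        rw [if_neg hne]
      rw [h2] at hconst
      rcases Bool.eq_false_or_eq_true (fA c (fI c)) with h | h <;> rw [h] at hconst <;>
        norm_num [Geo.bval] at hconst
    have hb : fA c (fI c) = fb.2 := by
      have h2 : ctr (fI c) = Geo.bval fb.2 := by
        simp only [hctr, PiLp.toLp_apply]
        rw [if_pos hIc]
      rw [h2] at hconst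
      rcases Bool.eq_false_or_eq_true (fA c (fI c)) with h | h <;>
        rcases Bool.eq_false_or_eq_true fb.2 with h' | h' <;> rw [h, h'] at hconst ⊢ <;>
        first
          | rfl
          | norm_num [Geo.bval] at hconst
    refine ⟨c, hc, ?_⟩
    rw [hfm']
    simp only
    rw [Prod.ext_iff]
    exact ⟨hIc, hb⟩
  -- cardinality: at least 6 cells
  have hcard6 : 6 ≤ P.cells.card := by
    have himg : (Finset.univ : Finset (Fin 3 × Bool)) ⊆ P.cells.image fm' := by
      intro fb _
      obtain ⟨c, hc, hfb⟩ := hsurj fb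
      exact Finset.mem_image.mpr ⟨c, hc, hfb⟩
    have h1 := Finset.card_le_card himg
    have h2 := Finset.card_image_le (s := P.cells) (f := fm')
    simp only [Finset.card_univ] at h1
    have : Fintype.card (Fin 3 × Bool) = 6 := by simp
    omega
  -- the bounding box
  obtain ⟨hbox, _, _, _, _⟩ := hbb
  set box : Finset Cell := Finset.Icc x0 (x0 + w - 1) ×ˢ Finset.Icc y0 (y0 + h - 1) with hboxdef
  have hsub : P.cells ⊆ box := by
    intro c hc
    obtain ⟨h1, h2, h3, h4⟩ := hbox c hc
    rw [hboxdef]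
    rw [Finset.mem_product, Finset.mem_Icc, Finset.mem_Icc]
    omega
  have hboxcard : box.card = w * h := by
    rw [hboxdef, Finset.card_product, Int.card_Icc, Int.card_Icc]
    have e1 : x0 + ↑w - 1 + 1 - x0 = (w : ℤ) := by ring
    have e2 : y0 + ↑h - 1 + 1 - y0 = (h : ℤ) := by ring
    rw [e1, e2, Int.toNat_natCast, Int.toNat_natCast]
  have hwh : w * h = 6 ∧ P.cells = box := by
    have hle : P.cells.card ≤ w * h := by
      rw [← hboxcard]
      exact Finset.card_le_card hsub
    have hwh6 : w * h ≤ 6 := by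
      rcases hsize with ⟨rfl, hw⟩ | ⟨rfl, hh⟩ <;> nlinarith
    refine ⟨by omega, ?_⟩
    apply Finset.eq_of_subset_of_card_le hsub
    rw [hboxcard]
    omega
  obtain ⟨hwh6, hcellsbox⟩ := hwh
  have hcellscard : P.cells.card = 6 := by
    have := Finset.card_le_card hsub
    rw [hboxcard] at this
    omega
  -- injectivity of the face map
  have hinj : Set.InjOn fm' P.cells := by
    apply Finset.injOn_of_card_image_eq
    have himguniv : P.cells.image fm' = Finset.univ := by
      apply Finset.univ_subset_iff.mp
      intro fb _
      obtain ⟨c, hc, hfb⟩ := hsurj fb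
      exact Finset.mem_image.mpr ⟨c, hc, hfb⟩
    rw [himguniv, hcellscard]
    simp
  -- membership in the box
  have hboxmem : ∀ c : Cell, c ∈ P.cells ↔
      (x0 ≤ c.1 ∧ c.1 ≤ x0 + (w:ℤ) - 1 ∧ y0 ≤ c.2 ∧ c.2 ≤ y0 + (h:ℤ) - 1) := by
    intro c
    rw [hcellsbox, hboxdef, Finset.mem_product, Finset.mem_Icc, Finset.mem_Icc]
    tauto
  -- corner identifications along joins
  have hmk2c : ∀ a b a' b' : ℝ, a = a' → b = b' → mk2 a b = mk2 a' b' := by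
    intro a b a' b' h1 h2
    rw [h1, h2]
  have hjoinE : ∀ c d : Cell, (c, d) ∈ P.joins → d = (c.1 + 1, c.2) →
      ∀ (hc : c ∈ P.cells) (hd : d ∈ P.cells),
      β (pt P c hc (mk2 1 0) Geo.m10) = β (pt P d hd (mk2 0 0) Geo.m00) ∧
      β (pt P c hc (mk2 1 1) Geo.m11) = β (pt P d hd (mk2 0 1) Geo.m01) := by
    intro c d hj hde hc hdm
    constructor <;>
    · apply congrArg β
      apply Quot.sound
      refine ⟨?_, Or.inr hj⟩
      subst hde
      show mk2 _ _ = mk2 _ _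
      apply hmk2c <;> simp only [Geo.mk2_0, Geo.mk2_1] <;> push_cast <;> ring
  have hjoinN : ∀ c d : Cell, (c, d) ∈ P.joins → d = (c.1, c.2 + 1) →
      ∀ (hc : c ∈ P.cells) (hd : d ∈ P.cells),
      β (pt P c hc (mk2 0 1) Geo.m01) = β (pt P d hd (mk2 0 0) Geo.m00) ∧
      β (pt P c hc (mk2 1 1) Geo.m11) = β (pt P d hd (mk2 1 0) Geo.m10) := by
    intro c d hj hde hc hdm
    constructor <;>
    · apply congrArg β
      apply Quot.sound
      refine ⟨?_, Or.inr hj⟩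
      subst hde
      show mk2 _ _ = mk2 _ _
      apply hmk2c <;> simp only [Geo.mk2_0, Geo.mk2_1] <;> push_cast <;> ring
  -- the two orientations
  rcases hsize with ⟨hh2, hw3⟩ | ⟨hw2, hh3⟩
  · -- h = 2, w = 3
    subst hh2
    have hw : w = 3 := by omega
    subst hw
    set ι : Comb.Pos → Cell := fun q => ((x0 + (q.1:ℤ), y0 + (q.2:ℤ)) : Cell) with hι
    have hιcell : ∀ q ∈ Comb.posList, ι q ∈ P.cells := by
      intro q hq
      obtain ⟨h1, h2⟩ := (Geo.mem_posList_iff q).mp hq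
      rw [hboxmem]
      simp only [hι]
      omega
    have hmemι : ∀ q, ι q ∈ P.cells → q ∈ Comb.posList := by
      intro q hmem
      rw [hboxmem] at hmem
      simp only [hι] at hmem
      rw [Geo.mem_posList_iff]
      omega
    have hιinj : ∀ q q' : Comb.Pos, ι q = ι q' → q = q' := by
      intro q q' hqq
      simp only [hι, Prod.mk.injEq] at hqq
      have : q.1 = q'.1 ∧ q.2 = q'.2 := by omega
      exact Prod.ext this.1 this.2
    apply Geo.bridge
      (fun q => fA (ι q)) (fun q => Comb.bflip (fJ (ι q)) (fA (ι q)))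
      (fun q => Comb.bflip (fK (ι q)) (fA (ι q)))
      (fun q => Comb.bflip (fJ (ι q)) (Comb.bflip (fK (ι q)) (fA (ι q))))
      (fun q => fm' (ι q)) (fun a b => (ι a, ι b) ∈ P.joins)
    · -- hstruct
      intro q hq
      obtain ⟨⟨h1, h2, h3⟩, _, _⟩ := hdata (ι q) (hιcell q hq)
      exact ⟨fJ (ι q), fK (ι q), h1, h2, h3, rfl, rfl, rfl, rfl⟩
    · -- hfm
      intro q hq q' hq' hne heq
      exact hne (hιinj q q' (hinj (hιcell q hq) (hιcell q' hq') heq))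
    · -- hJmem
      intro a b hJ
      obtain ⟨h1, h2⟩ := P.joins_mem _ hJ
      exact ⟨hmemι a h1, hmemι b h2⟩
    · -- hJadj
      intro a b hJ
      have hadj := P.joins_adj _ hJ
      unfold cellAdj at hadj
      simp only [hι] at hadj
      omega
    · -- hJsymm
      intro a b hJ
      exact P.joins_symm _ hJ
    · -- hcompatCV
      intro a b hJ
      obtain ⟨hma, hmb⟩ := P.joins_mem _ hJ
      obtain ⟨_, _, hca⟩ := hdata (ι a) hma
      obtain ⟨_, _, hcb⟩ := hdata (ι b) hmb
      obtain ⟨ca0, ca1, ca2, ca3⟩ := hca hma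
      obtain ⟨cb0, cb1, cb2, cb3⟩ := hcb hmb
      constructor
      · rintro ⟨h1, h2⟩
        have hde : ι b = ((ι a).1 + 1, (ι a).2) := by
          simp only [hι, Prod.mk.injEq]
          omega
        obtain ⟨je1, je2⟩ := hjoinE (ι a) (ι b) hJ hde hma hmb
        constructor
        · rw [← ca1, je1, cb0]
        · rw [← ca3, je2, cb2]
      · rintro ⟨h1, h2⟩
        have hde : ι b = ((ι a).1, (ι a).2 + 1) := by
          simp only [hι, Prod.mk.injEq]
          omega
        obtain ⟨je1, je2⟩ := hjoinN (ι a) (ι b) hJ hde hma hmb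
        constructor
        · rw [← ca2, je1, cb0]
        · rw [← ca3, je2, cb1]
    · -- hconn
      intro q hq
      set π : Cell → Comb.Pos := fun c => ((c.1 - x0).toNat, (c.2 - y0).toNat) with hπ
      have hπι : ∀ q : Comb.Pos, π (ι q) = q := by
        intro q
        simp only [hπ, hι]
        refine Prod.ext ?_ ?_ <;> simp only <;> omega
      have hιπ : ∀ c ∈ P.cells, ι (π c) = c := by
        intro c hc
        rw [hboxmem] at hc
        simp only [hπ, hι]
        refine Prod.ext ?_ ?_ <;> simp only <;> omega
      have hlift : ∀ c d : Cell, (c, d) ∈ P.joins → (ι (π c), ι (π d)) ∈ P.joins := by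
        intro c d hJ
        obtain ⟨h1, h2⟩ := P.joins_mem _ hJ
        rw [hιπ c h1, hιπ d h2]
        exact hJ
      have hrtg := P.connected (ι (0,0)) (hιcell _ (by decide)) (ι q) (hιcell q hq)
      have : Relation.ReflTransGen (fun a b : Comb.Pos => (ι a, ι b) ∈ P.joins) (π (ι (0,0))) (π (ι q)) := Relation.ReflTransGen.lift
        (p := fun a b : Comb.Pos => (ι a, ι b) ∈ P.joins) π hlift _ _ hrtg
      rwa [hπι, hπι] at this
  · -- w = 2, h = 3
    subst hw2
    have hh : h = 3 := by omega
    subst hh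
    set ι : Comb.Pos → Cell := fun q => ((x0 + (q.2:ℤ), y0 + (q.1:ℤ)) : Cell) with hι
    have hιcell : ∀ q ∈ Comb.posList, ι q ∈ P.cells := by
      intro q hq
      obtain ⟨h1, h2⟩ := (Geo.mem_posList_iff q).mp hq
      rw [hboxmem]
      simp only [hι]
      omega
    have hmemι : ∀ q, ι q ∈ P.cells → q ∈ Comb.posList := by
      intro q hmem
      rw [hboxmem] at hmem
      simp only [hι] at hmem
      rw [Geo.mem_posList_iff]
      omega
    have hιinj : ∀ q q' : Comb.Pos, ι q = ι q' → q = q' := by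
      intro q q' hqq
      simp only [hι, Prod.mk.injEq] at hqq
      have : q.1 = q'.1 ∧ q.2 = q'.2 := by omega
      exact Prod.ext this.1 this.2
    apply Geo.bridge
      (fun q => fA (ι q)) (fun q => Comb.bflip (fK (ι q)) (fA (ι q)))
      (fun q => Comb.bflip (fJ (ι q)) (fA (ι q)))
      (fun q => Comb.bflip (fK (ι q)) (Comb.bflip (fJ (ι q)) (fA (ι q))))
      (fun q => fm' (ι q)) (fun a b => (ι a, ι b) ∈ P.joins)
    · -- hstruct
      intro q hq
      obtain ⟨⟨h1, h2, h3⟩, _, _⟩ := hdata (ι q) (hιcell q hq)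
      exact ⟨fK (ι q), fJ (ι q), h2, h1, Ne.symm h3, rfl, rfl, rfl, rfl⟩
    · -- hfm
      intro q hq q' hq' hne heq
      exact hne (hιinj q q' (hinj (hιcell q hq) (hιcell q' hq') heq))
    · -- hJmem
      intro a b hJ
      obtain ⟨h1, h2⟩ := P.joins_mem _ hJ
      exact ⟨hmemι a h1, hmemι b h2⟩
    · -- hJadj
      intro a b hJ
      have hadj := P.joins_adj _ hJ
      unfold cellAdj at hadj
      simp only [hι] at hadj
      omega
    · -- hJsymm
      intro a b hJ
      exact P.joins_symm _ hJ
    · -- hcompatCV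
      intro a b hJ
      obtain ⟨hma, hmb⟩ := P.joins_mem _ hJ
      obtain ⟨⟨_, _, hjka⟩, _, hca⟩ := hdata (ι a) hma
      obtain ⟨_, _, hcb⟩ := hdata (ι b) hmb
      obtain ⟨ca0, ca1, ca2, ca3⟩ := hca hma
      obtain ⟨cb0, cb1, cb2, cb3⟩ := hcb hmb
      have hflipa : Comb.bflip (fK (ι a)) (Comb.bflip (fJ (ι a)) (fA (ι a))) =
          Comb.bflip (fJ (ι a)) (Comb.bflip (fK (ι a)) (fA (ι a))) :=
        Comb.flip_comm (Ne.symm hjka) _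
      constructor
      · rintro ⟨h1, h2⟩
        have hde : ι b = ((ι a).1, (ι a).2 + 1) := by
          simp only [hι, Prod.mk.injEq]
          omega
        obtain ⟨je1, je2⟩ := hjoinN (ι a) (ι b) hJ hde hma hmb
        constructor
        · rw [← ca2, je1, cb0]
        · rw [hflipa, ← ca3, je2, cb1]
      · rintro ⟨h1, h2⟩
        have hde : ι b = ((ι a).1 + 1, (ι a).2) := by
          simp only [hι, Prod.mk.injEq]
          omega
        obtain ⟨je1, je2⟩ := hjoinE (ι a) (ι b) hJ hde hma hmb
        constructor
        · rw [← ca1, je1, cb0]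
        · rw [hflipa, ← ca3, je2, cb2]
    · -- hconn
      intro q hq
      set π : Cell → Comb.Pos := fun c => ((c.2 - y0).toNat, (c.1 - x0).toNat) with hπ
      have hπι : ∀ q : Comb.Pos, π (ι q) = q := by
        intro q
        simp only [hπ, hι]
        refine Prod.ext ?_ ?_ <;> simp only <;> omega
      have hιπ : ∀ c ∈ P.cells, ι (π c) = c := by
        intro c hc
        rw [hboxmem] at hc
        simp only [hπ, hι]
        refine Prod.ext ?_ ?_ <;> simp only <;> omega
      have hlift : ∀ c d : Cell, (c, d) ∈ P.joins → (ι (π c), ι (π d)) ∈ P.joins := by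
        intro c d hJ
        obtain ⟨h1, h2⟩ := P.joins_mem _ hJ
        rw [hιπ c h1, hιπ d h2]
        exact hJ
      have hrtg := P.connected (ι (0,0)) (hιcell _ (by decide)) (ι q) (hιcell q hq)
      have : Relation.ReflTransGen (fun a b : Comb.Pos => (ι a, ι b) ∈ P.joins) (π (ι (0,0))) (π (ι q)) := Relation.ReflTransGen.lift
        (p := fun a b : Comb.Pos => (ι a, ι b) ∈ P.joins) π hlift _ _ hrtg
      rwa [hπι, hπι] at this

end CubeFold
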